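/- Let J ⊆ R = ℂ[x₁,x₂,x₃] be a homogeneous ideal such that gin(J) contains a power of x₁ and a power of x₂. Set s = min{a : x₁^a ∈ gin(J)} and ν_a = min{b : x₁^a x₂^b ∈ gin(J)} for 0 ≤ a ≤ s. Suppose 0 ≤ i < s − 1 and ν_{i+1} + 2 < ν_i. Let K ⊆ J be the ideal generated by all elements of J of degree ≤ i + ν_{i+1} + 2. Then every monomial in gin(K) is divisible by x₁^{i+1}. -/

import Mathlib

open MvPolynomial

noncomputable section

/-- Total degree of an exponent vector. -/
def edeg {m : ℕ} (A : Fin m →₀ ℕ) : ℕ := A.sum fun _ v => v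

/-- `DRLlt A B` means `A ≺ B` in the degree reverse lexicographic order:
larger total degree is larger; among monomials of equal total degree,
`x^A ≻ x^B` iff the last nonzero entry of `A - B` is negative. -/
def DRLlt {m : ℕ} (A B : Fin m →₀ ℕ) : Prop :=
  edeg A < edeg B ∨
    (edeg A = edeg B ∧ ∃ k : Fin m, (∀ l, k < l → A l = B l) ∧ B k < A k)

/-- `μ` is the leading monomial (w.r.t. degrevlex) of the polynomial `f`. -/
def IsLeadMonOf {m : ℕ} (μ : Fin m →₀ ℕ) (f : MvPolynomial (Fin m) ℂ) : Prop :=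
  μ ∈ f.support ∧ ∀ ν ∈ f.support, ν ≠ μ → DRLlt ν μ

/-- The initial ideal of `I`: the monomial ideal generated by the degrevlex leading
monomials of the nonzero elements of `I`. -/
def initialIdeal {m : ℕ} (I : Ideal (MvPolynomial (Fin m) ℂ)) :
    Ideal (MvPolynomial (Fin m) ℂ) :=
  Ideal.span {p | ∃ μ f, f ∈ I ∧ IsLeadMonOf μ f ∧ p = monomial μ (1 : ℂ)}

/-- The monomial with exponent vector `μ` belongs to the ideal `J`. -/
def monomialMem {m : ℕ} (μ : Fin m →₀ ℕ) (J : Ideal (MvPolynomial (Fin m) ℂ)) : Prop :=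
  monomial μ (1 : ℂ) ∈ J

/-- `J` is a monomial ideal. -/
def IsMonomialIdeal {m : ℕ} (J : Ideal (MvPolynomial (Fin m) ℂ)) : Prop :=
  ∃ T : Set (Fin m →₀ ℕ), J = Ideal.span ((fun μ => monomial μ (1 : ℂ)) '' T)

/-- `J` is a Borel-fixed monomial ideal: for every monomial `x^A ∈ J` and every pair of
adjacent indices `k, l = k+1` with `A l > 0`, the monomial `x_k · x^A / x_l` is in `J`. -/
def IsBorelFixed {m : ℕ} (J : Ideal (MvPolynomial (Fin m) ℂ)) : Prop :=
  IsMonomialIdeal J ∧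
    ∀ A : Fin m →₀ ℕ, monomialMem A J → ∀ k l : Fin m, (k : ℕ) + 1 = (l : ℕ) →
      0 < A l → monomialMem (A + Finsupp.single k 1 - Finsupp.single l 1) J

/-- The image `g·I` of the ideal `I` under the algebra automorphism sending
`xᵢ` to `Σⱼ gᵢⱼ xⱼ`. -/
def matAct {m : ℕ} (g : Matrix (Fin m) (Fin m) ℂ) (I : Ideal (MvPolynomial (Fin m) ℂ)) :
    Ideal (MvPolynomial (Fin m) ℂ) :=
  Ideal.map (MvPolynomial.aeval (fun i => ∑ j, MvPolynomial.C (g i j) * X j) :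
      MvPolynomial (Fin m) ℂ →ₐ[ℂ] MvPolynomial (Fin m) ℂ) I

/-- `G` is the generic initial ideal of `I` (Galligo): `G` is a Borel-fixed monomial ideal
and there is a nonzero polynomial `P` in the matrix entries such that `in(g·I) = G`
whenever `g` is invertible and `P(g) ≠ 0`. -/
def IsGinOf {m : ℕ} (I G : Ideal (MvPolynomial (Fin m) ℂ)) : Prop :=
  IsBorelFixed G ∧
    ∃ P : MvPolynomial (Fin m × Fin m) ℂ, P ≠ 0 ∧
      ∀ g : Matrix (Fin m) (Fin m) ℂ, IsUnit g.det →
        MvPolynomial.eval (fun p => g p.1 p.2) P ≠ 0 → initialIdeal (matAct g I) = G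

/-- A homogeneous ideal (contains all homogeneous components of its members). -/
def IsHomogIdeal {m : ℕ} (I : Ideal (MvPolynomial (Fin m) ℂ)) : Prop :=
  ∀ f ∈ I, ∀ n : ℕ, MvPolynomial.homogeneousComponent n f ∈ I

/-- The homogeneous ideal of a reduced, irreducible, nondegenerate curve in ℙ³:
a homogeneous prime ideal containing no nonzero linear form, with
`dim S/I_C = 2`. -/
def IsCurveIdeal (I : Ideal (MvPolynomial (Fin 4) ℂ)) : Prop :=
  IsHomogIdeal I ∧ I.IsPrime ∧ (∀ f ∈ I, f.IsHomogeneous 1 → f = 0) ∧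
    ringKrullDim (MvPolynomial (Fin 4) ℂ ⧸ I) = 2

/-- `f(i,j) = min{k : x₁^i x₂^j x₃^k ∈ G} ∈ ℕ ∪ {∞}`. -/
def finv (G : Ideal (MvPolynomial (Fin 4) ℂ)) (i j : ℕ) : ℕ∞ :=
  sInf ((fun k : ℕ => (k : ℕ∞)) ''
    {k : ℕ | monomialMem (Finsupp.single 0 i + Finsupp.single 1 j + Finsupp.single 2 k) G})

/-- `s_k = min{i : f(i,0) ≤ k}`. -/
def sK (G : Ideal (MvPolynomial (Fin 4) ℂ)) (k : ℕ) : ℕ :=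
  sInf {i : ℕ | finv G i 0 ≤ (k : ℕ∞)}

/-- `μ_i(k) = min{j : f(i,j) ≤ k}`, the invariants of the curve. -/
def muInv (G : Ideal (MvPolynomial (Fin 4) ℂ)) (i k : ℕ) : ℕ :=
  sInf {j : ℕ | finv G i j ≤ (k : ℕ∞)}



namespace GinAux

abbrev R3 := MvPolynomial (Fin 3) ℂ

/-! ### degrevlex order basics -/

lemma edeg_eq3 (A : Fin 3 →₀ ℕ) : edeg A = A 0 + A 1 + A 2 := by
  rw [edeg, Finsupp.sum_fintype _ _ (fun _ => rfl)]
  exact Fin.sum_univ_three _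

lemma edeg_add (A B : Fin 3 →₀ ℕ) : edeg (A + B) = edeg A + edeg B := by
  simp only [edeg_eq3, Finsupp.add_apply]; ring

lemma edeg_degree (A : Fin 3 →₀ ℕ) : A.degree = edeg A := rfl

lemma fin3_cases (l : Fin 3) : l = 0 ∨ l = 1 ∨ l = 2 := by omega

lemma finsupp_ext3 {A B : Fin 3 →₀ ℕ} (h0 : A 0 = B 0) (h1 : A 1 = B 1) (h2 : A 2 = B 2) :
    A = B := by
  ext l
  rcases fin3_cases l with rfl | rfl | rfl <;> assumption

lemma DRLlt_iff {A B : Fin 3 →₀ ℕ} :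
    DRLlt A B ↔ edeg A < edeg B ∨
      (edeg A = edeg B ∧ (B 2 < A 2 ∨ (B 2 = A 2 ∧ B 1 < A 1))) := by
  constructor
  · rintro (h | ⟨he, k, hk, hlt⟩)
    · exact Or.inl h
    rcases fin3_cases k with rfl | rfl | rfl
    · exfalso
      have h1 : A 1 = B 1 := hk 1 (by omega)
      have h2 : A 2 = B 2 := hk 2 (by omega)
      have := edeg_eq3 A; have := edeg_eq3 B
      omega
    · have h2 : A 2 = B 2 := hk 2 (by omega)
      exact Or.inr ⟨he, Or.inr ⟨h2.symm, hlt⟩⟩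
    · exact Or.inr ⟨he, Or.inl hlt⟩
  · rintro (h | ⟨he, h2 | ⟨h2, h1⟩⟩)
    · exact Or.inl h
    · refine Or.inr ⟨he, 2, fun l hl => ?_, h2⟩
      exfalso; have := l.isLt; have : (2:Fin 3) < l → (2:ℕ) < (l:ℕ) := fun h => h
      omega
    · refine Or.inr ⟨he, 1, fun l hl => ?_, h1⟩
      have hv : (1:ℕ) < (l:ℕ) := hl
      have : l = 2 := by omega
      rw [this]; exact h2.symm

lemma DRLlt_asymm {A B : Fin 3 →₀ ℕ} (h : DRLlt A B) : ¬ DRLlt B A := by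
  rw [DRLlt_iff] at *; omega

lemma DRLlt_trans {A B C : Fin 3 →₀ ℕ} (h1 : DRLlt A B) (h2 : DRLlt B C) : DRLlt A C := by
  rw [DRLlt_iff] at *; omega

lemma DRLlt_total {A B : Fin 3 →₀ ℕ} (h : A ≠ B) : DRLlt A B ∨ DRLlt B A := by
  rw [DRLlt_iff, DRLlt_iff]
  have hA := edeg_eq3 A; have hB := edeg_eq3 B
  by_contra hc
  push_neg at hc
  apply h
  apply finsupp_ext3 <;> omega

lemma DRLlt_add_right {A B : Fin 3 →₀ ℕ} (C : Fin 3 →₀ ℕ) (h : DRLlt A B) :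
    DRLlt (A + C) (B + C) := by
  rw [DRLlt_iff] at *
  simp only [edeg_add, Finsupp.add_apply]
  omega

/-! ### lead monomials -/

lemma finset_exists_max (s : Finset (Fin 3 →₀ ℕ)) (hs : s.Nonempty) :
    ∃ μ ∈ s, ∀ ν ∈ s, ν ≠ μ → DRLlt ν μ := by
  classical
  induction s using Finset.induction_on with
  | empty => exact absurd hs (by simp)
  | @insert a t ha ih =>
    rcases t.eq_empty_or_nonempty with rfl | ht
    · exact ⟨a, by simp, by intro ν hν hne; simp at hν; exact absurd hν hne⟩
    · obtain ⟨μ, hμt, hμ⟩ := ih ht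
      rcases eq_or_ne a μ with rfl | hne
      · exact ⟨a, Finset.mem_insert_self _ _, by
          intro ν hν hne'
          rcases Finset.mem_insert.mp hν with rfl | hν
          · exact absurd rfl hne'
          · exact hμ ν hν hne'⟩
      rcases DRLlt_total hne with h | h
      · refine ⟨μ, Finset.mem_insert_of_mem hμt, ?_⟩
        intro ν hν hne'
        rcases Finset.mem_insert.mp hν with rfl | hν
        · exact h
        · exact hμ ν hν hne'
      · refine ⟨a, Finset.mem_insert_self _ _, ?_⟩
        intro ν hν hne'
        rcases Finset.mem_insert.mp hν with rfl | hν
        · exact absurd rfl hne'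
        · rcases eq_or_ne ν μ with rfl | hν2
          · exact h
          · exact DRLlt_trans (hμ ν hν hν2) h

lemma exists_isLeadMonOf {f : R3} (hf : f ≠ 0) : ∃ μ, IsLeadMonOf μ f := by
  obtain ⟨μ, hμ, h⟩ := finset_exists_max f.support (support_nonempty.mpr hf)
  exact ⟨μ, hμ, h⟩

lemma isLeadMonOf_monomial_mul {f : R3} {lam tau : Fin 3 →₀ ℕ} (h : IsLeadMonOf lam f) :
    IsLeadMonOf (tau + lam) ((monomial tau (1:ℂ)) * f) := by
  classical
  have key : ∀ ν : Fin 3 →₀ ℕ, coeff ν ((monomial tau (1:ℂ)) * f)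
      = if tau ≤ ν then coeff (ν - tau) f else 0 := by
    intro ν
    rw [coeff_monomial_mul']
    split <;> simp
  constructor
  · rw [mem_support_iff, key]
    rw [if_pos (self_le_add_right tau lam)]
    simpa using h.1
  · intro ν hν hne
    rw [mem_support_iff, key] at hν
    by_cases hle : tau ≤ ν
    · rw [if_pos hle] at hν
      set σ := ν - tau with hσ
      have hνeq : ν = tau + σ := by
        rw [hσ, add_comm]
        exact (tsub_add_cancel_of_le hle).symm
      have hσs : σ ∈ f.support := mem_support_iff.mpr hν
      have hσne : σ ≠ lam := by
        intro hcon; apply hne; rw [hνeq, hcon]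
      have := DRLlt_add_right tau (h.2 σ hσs hσne)
      rw [hνeq, add_comm σ tau, add_comm lam tau] at *
      exact this
    · rw [if_neg hle] at hν; exact absurd rfl hν

lemma isHomog_edeg_of_mem_support {f : R3} {n : ℕ} (h : f.IsHomogeneous n)
    {ν : Fin 3 →₀ ℕ} (hν : ν ∈ f.support) : edeg ν = n := by
  by_contra hne
  exact mem_support_iff.mp hν (h.coeff_eq_zero (by rw [edeg_degree]; exact hne))

lemma isLeadMonOf_homogeneousComponent {f : R3} {μ : Fin 3 →₀ ℕ} (h : IsLeadMonOf μ f) :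
    IsLeadMonOf μ (homogeneousComponent (edeg μ) f) := by
  have hmem : ∀ ν : Fin 3 →₀ ℕ, ν ∈ (homogeneousComponent (edeg μ) f).support ↔
      (edeg ν = edeg μ ∧ ν ∈ f.support) := by
    intro ν
    rw [mem_support_iff, coeff_homogeneousComponent, edeg_degree]
    constructor
    · intro hx
      by_cases hd : edeg ν = edeg μ
      · exact ⟨hd, by rw [if_pos hd] at hx; exact mem_support_iff.mpr hx⟩
      · rw [if_neg hd] at hx; exact absurd rfl hx
    · rintro ⟨hd, hs⟩
      rw [if_pos hd]; exact mem_support_iff.mp hs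
  constructor
  · rw [hmem]; exact ⟨rfl, h.1⟩
  · intro ν hν hne
    rw [hmem] at hν
    exact h.2 ν hν.2 hne

/-! ### initial ideal membership -/

lemma initialIdeal_mono {I I' : Ideal R3} (h : I ≤ I') : initialIdeal I ≤ initialIdeal I' := by
  apply Ideal.span_mono
  rintro p ⟨μ, f, hf, hl, rfl⟩
  exact ⟨μ, f, h hf, hl, rfl⟩

lemma monomialMem_of_lead {I : Ideal R3} {f : R3} {lam μ : Fin 3 →₀ ℕ}
    (hf : f ∈ I) (hl : IsLeadMonOf lam f) (hle : lam ≤ μ) : monomialMem μ (initialIdeal I) := by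
  have h1 : monomial lam (1:ℂ) ∈ initialIdeal I :=
    Ideal.subset_span ⟨lam, f, hf, hl, rfl⟩
  have h2 : monomial μ (1:ℂ) = monomial (μ - lam) (1:ℂ) * monomial lam (1:ℂ) := by
    rw [monomial_mul, one_mul, tsub_add_cancel_of_le hle]
  rw [monomialMem, h2]
  exact Ideal.mul_mem_left _ _ h1

lemma monomialMem_initialIdeal {I : Ideal R3} {μ : Fin 3 →₀ ℕ}
    (h : monomialMem μ (initialIdeal I)) :
    ∃ f lam, f ∈ I ∧ IsLeadMonOf lam f ∧ lam ≤ μ := by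
  classical
  rw [monomialMem, initialIdeal, Ideal.span] at h
  rw [Submodule.mem_span_set'] at h
  obtain ⟨n, c, gsub, hsum⟩ := h
  have hco : (1:ℂ) = ∑ ii : Fin n, coeff μ (c ii • (gsub ii : R3)) := by
    calc (1:ℂ) = coeff μ (monomial μ (1:ℂ)) := by simp
    _ = coeff μ (∑ ii : Fin n, c ii • (gsub ii : R3)) := by rw [hsum]
    _ = ∑ ii : Fin n, coeff μ (c ii • (gsub ii : R3)) := by
        rw [show (coeff μ (∑ ii : Fin n, c ii • (gsub ii : R3)))
            = (lcoeff ℂ μ) (∑ ii : Fin n, c ii • (gsub ii : R3)) from rfl]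
        rw [map_sum]
        rfl
  have hne : ∃ ii : Fin n, coeff μ (c ii • (gsub ii : R3)) ≠ 0 := by
    by_contra hc
    push_neg at hc
    rw [Finset.sum_eq_zero (fun ii _ => hc ii)] at hco
    exact one_ne_zero hco
  obtain ⟨ii, hii⟩ := hne
  obtain ⟨lam, f, hf, hl, hp⟩ := (gsub ii).2
  refine ⟨f, lam, hf, hl, ?_⟩
  rw [smul_eq_mul, hp, coeff_mul_monomial'] at hii
  by_contra hle
  rw [if_neg hle] at hii
  exact hii rfl

lemma monomialMem_initialIdeal_homog {I : Ideal R3} (hI : IsHomogIdeal I) {μ : Fin 3 →₀ ℕ}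
    (h : monomialMem μ (initialIdeal I)) :
    ∃ f, f ∈ I ∧ f.IsHomogeneous (edeg μ) ∧ IsLeadMonOf μ f := by
  obtain ⟨f, lam, hf, hl, hle⟩ := monomialMem_initialIdeal h
  have htop := isLeadMonOf_homogeneousComponent hl
  have htopmem : homogeneousComponent (edeg lam) f ∈ I := hI f hf (edeg lam)
  have htoph : (homogeneousComponent (edeg lam) f).IsHomogeneous (edeg lam) :=
    homogeneousComponent_isHomogeneous _ _
  set ft := homogeneousComponent (edeg lam) f with hft
  refine ⟨monomial (μ - lam) (1:ℂ) * ft, Ideal.mul_mem_left _ _ htopmem, ?_, ?_⟩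
  · have h1 : ((monomial (μ - lam)) (1:ℂ)).IsHomogeneous (edeg (μ - lam)) :=
      isHomogeneous_monomial _ (edeg_degree _)
    have h2 := h1.mul htoph
    have h3 : edeg (μ - lam) + edeg lam = edeg μ := by
      rw [← edeg_add, tsub_add_cancel_of_le hle]
    rwa [h3] at h2
  · have := isLeadMonOf_monomial_mul (tau := μ - lam) htop
    rwa [tsub_add_cancel_of_le hle] at this

lemma monomialMem_mul_single {T : Ideal R3} {μ : Fin 3 →₀ ℕ} (h : monomialMem μ T)
    (tau : Fin 3 →₀ ℕ) : monomialMem (tau + μ) T := by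
  have : monomial (tau + μ) (1:ℂ) = monomial tau (1:ℂ) * monomial μ (1:ℂ) := by
    rw [monomial_mul, one_mul]
  rw [monomialMem, this]
  exact Ideal.mul_mem_left _ _ h

/-! ### homogeneous components -/

lemma homogComp_of_isHomog {q : R3} {k n : ℕ} (h : q.IsHomogeneous k) :
    homogeneousComponent n q = if n = k then q else 0 := by
  by_cases hnk : n = k
  · subst hnk
    rw [if_pos rfl]
    ext d
    rw [coeff_homogeneousComponent]
    by_cases hd : d.degree = n
    · rw [if_pos hd]
    · rw [if_neg hd]
      exact (h.coeff_eq_zero hd).symm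
  · rw [if_neg hnk]
    ext d
    rw [coeff_homogeneousComponent, coeff_zero]
    by_cases hd : d.degree = n
    · rw [if_pos hd]
      exact h.coeff_eq_zero (fun hk => hnk (hd.symm.trans hk))
    · rw [if_neg hd]

lemma homogComp_mul_homog {r t : R3} {n m : ℕ} (ht : t.IsHomogeneous n) :
    homogeneousComponent m (r * t) =
      (if n ≤ m then (homogeneousComponent (m - n) r) * t else 0) := by
  classical
  conv_lhs => rw [(sum_homogeneousComponent r).symm, Finset.sum_mul, map_sum]
  have hterm : ∀ k, homogeneousComponent m ((homogeneousComponent k r) * t)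
      = if m = k + n then (homogeneousComponent k r) * t else 0 := by
    intro k
    exact homogComp_of_isHomog ((homogeneousComponent_isHomogeneous k r).mul ht)
  rw [Finset.sum_congr rfl (fun k _ => hterm k)]
  by_cases hnm : n ≤ m
  · rw [if_pos hnm]
    rw [Finset.sum_eq_single (m-n) (fun k _ hkne => if_neg (by omega)) (fun hnm2 => ?_),
      if_pos (by omega)]
    rw [if_pos (by omega), homogeneousComponent_eq_zero, zero_mul]
    simp only [Finset.mem_range, not_lt] at hnm2; omega
  · rw [if_neg hnm]
    apply Finset.sum_eq_zero
    intro k _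
    rw [if_neg (by omega)]

/-! ### mono3 and Borel moves -/

def mono3 (a b c : ℕ) : Fin 3 →₀ ℕ :=
  Finsupp.single 0 a + Finsupp.single 1 b + Finsupp.single 2 c

@[simp] lemma mono3_apply0 (a b c : ℕ) : mono3 a b c 0 = a := by
  simp [mono3, Finsupp.single_apply]
@[simp] lemma mono3_apply1 (a b c : ℕ) : mono3 a b c 1 = b := by
  simp [mono3, Finsupp.single_apply]
@[simp] lemma mono3_apply2 (a b c : ℕ) : mono3 a b c 2 = c := by
  simp [mono3, Finsupp.single_apply]

lemma eq_mono3 (μ : Fin 3 →₀ ℕ) : μ = mono3 (μ 0) (μ 1) (μ 2) :=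
  finsupp_ext3 (by simp) (by simp) (by simp)

@[simp] lemma edeg_mono3 (a b c : ℕ) : edeg (mono3 a b c) = a + b + c := by
  rw [edeg_eq3]; simp

lemma mono3_single0 (a : ℕ) : mono3 a 0 0 = Finsupp.single 0 a := by
  apply finsupp_ext3 <;> simp [Finsupp.single_apply]

lemma mono3_single01 (a b : ℕ) : mono3 a b 0 = Finsupp.single 0 a + Finsupp.single 1 b := by
  apply finsupp_ext3 <;> simp [Finsupp.single_apply]

lemma borel_move_21 {T : Ideal R3} (hB : IsBorelFixed T) {a b c : ℕ}
    (h : monomialMem (mono3 a b c) T) (hc : 0 < c) :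
    monomialMem (mono3 a (b+1) (c-1)) T := by
  have h2 := hB.2 (mono3 a b c) h 1 2 (by simp) (by simpa using hc)
  have : mono3 a b c + Finsupp.single 1 1 - Finsupp.single 2 1 = mono3 a (b+1) (c-1) := by
    apply finsupp_ext3 <;>
      simp [Finsupp.tsub_apply, Finsupp.add_apply, Finsupp.single_apply]
  rwa [this] at h2

lemma borel_move_10 {T : Ideal R3} (hB : IsBorelFixed T) {a b c : ℕ}
    (h : monomialMem (mono3 a b c) T) (hb : 0 < b) :
    monomialMem (mono3 (a+1) (b-1) c) T := by
  have h2 := hB.2 (mono3 a b c) h 0 1 (by simp) (by simpa using hb)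
  have : mono3 a b c + Finsupp.single 0 1 - Finsupp.single 1 1 = mono3 (a+1) (b-1) c := by
    apply finsupp_ext3 <;>
      simp [Finsupp.tsub_apply, Finsupp.add_apply, Finsupp.single_apply]
  rwa [this] at h2

lemma borel_2to1 {T : Ideal R3} (hB : IsBorelFixed T) {a b c : ℕ}
    (h : monomialMem (mono3 a b c) T) : monomialMem (mono3 a (b+c) 0) T := by
  induction c generalizing b with
  | zero => simpa using h
  | succ c ih =>
    have := borel_move_21 hB h (by omega)
    simp only [Nat.add_sub_cancel] at this
    have h2 := ih this
    have : b + 1 + c = b + (c+1) := by omega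
    rwa [this] at h2

lemma borel_1to0 {T : Ideal R3} (hB : IsBorelFixed T) {a b : ℕ} (j : ℕ)
    (h : monomialMem (mono3 a b 0) T) (hj : j ≤ b) :
    monomialMem (mono3 (a+j) (b-j) 0) T := by
  induction j with
  | zero => simpa using h
  | succ j ih =>
    have hstep := borel_move_10 hB (ih (by omega)) (by omega)
    have e1 : a + j + 1 = a + (j+1) := by omega
    have e2 : b - j - 1 = b - (j+1) := by omega
    rwa [e1, e2] at hstep

/-! ### the substitution automorphisms -/

def phi (g : Matrix (Fin 3) (Fin 3) ℂ) : R3 →ₐ[ℂ] R3 :=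
  MvPolynomial.aeval (fun i => ∑ j, MvPolynomial.C (g i j) * X j)

lemma matAct_eq (g : Matrix (Fin 3) (Fin 3) ℂ) (I : Ideal R3) :
    matAct g I = Ideal.map (phi g) I := rfl

lemma phi_comp (g h : Matrix (Fin 3) (Fin 3) ℂ) :
    (phi g).comp (phi h) = phi (h * g) := by
  apply algHom_ext
  intro i
  rw [AlgHom.comp_apply]
  show phi g (phi h (X i)) = _
  rw [phi, phi, phi, aeval_X, aeval_X]
  calc (aeval fun i => ∑ j, C (g i j) * X j) (∑ j, C (h i j) * X j)
      = ∑ j : Fin 3, C (h i j) * (∑ k : Fin 3, C (g j k) * X k) := by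
        rw [map_sum]
        refine Finset.sum_congr rfl (fun j _ => ?_)
        rw [map_mul, aeval_C, aeval_X, algebraMap_eq]
    _ = ∑ j : Fin 3, ∑ k : Fin 3, C (h i j * g j k) * X k := by
        refine Finset.sum_congr rfl (fun j _ => ?_)
        rw [Finset.mul_sum]
        refine Finset.sum_congr rfl (fun k _ => ?_)
        rw [map_mul, mul_assoc]
    _ = ∑ k : Fin 3, ∑ j : Fin 3, C (h i j * g j k) * X k := Finset.sum_comm
    _ = ∑ k : Fin 3, C ((h * g) i k) * X k := by
        refine Finset.sum_congr rfl (fun k _ => ?_)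
        rw [← Finset.sum_mul, ← map_sum, Matrix.mul_apply]

lemma phi_one : phi (1 : Matrix (Fin 3) (Fin 3) ℂ) = AlgHom.id ℂ R3 := by
  apply algHom_ext
  intro i
  rw [phi, aeval_X, AlgHom.id_apply]
  rw [Finset.sum_eq_single i (fun j _ hj => by
    rw [Matrix.one_apply_ne (Ne.symm hj), map_zero, zero_mul])
    (fun h => absurd (Finset.mem_univ i) h)]
  rw [Matrix.one_apply_eq, map_one, one_mul]

lemma phi_cancel {g : Matrix (Fin 3) (Fin 3) ℂ} (hdet : IsUnit g.det) (p : R3) :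
    phi g (phi g⁻¹ p) = p := by
  have h := phi_comp g g⁻¹
  rw [Matrix.nonsing_inv_mul g hdet, phi_one] at h
  calc phi g (phi g⁻¹ p) = ((phi g).comp (phi g⁻¹)) p := rfl
  _ = p := by rw [h]; rfl

lemma phi_cancel' {g : Matrix (Fin 3) (Fin 3) ℂ} (hdet : IsUnit g.det) (p : R3) :
    phi g⁻¹ (phi g p) = p := by
  have h := phi_comp g⁻¹ g
  rw [Matrix.mul_nonsing_inv g hdet, phi_one] at h
  calc phi g⁻¹ (phi g p) = ((phi g⁻¹).comp (phi g)) p := rfl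
  _ = p := by rw [h]; rfl

lemma phi_surjective {g : Matrix (Fin 3) (Fin 3) ℂ} (hdet : IsUnit g.det) :
    Function.Surjective (phi g) := fun p => ⟨phi g⁻¹ p, phi_cancel hdet p⟩

/-- substitution with homogeneous degree-1 images preserves homogeneity -/
lemma subst_isHomog (u : Fin 3 → R3) (hu : ∀ i, (u i).IsHomogeneous 1) {p : R3} {n : ℕ}
    (hp : p.IsHomogeneous n) : ((aeval u) p).IsHomogeneous n := by
  have hmono : ∀ v : Fin 3 →₀ ℕ, v.degree = n → ∀ c : ℂ,
      ((aeval u) (monomial v c)).IsHomogeneous n := by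
    intro v hv c
    rw [aeval_monomial]
    have h1 : ((algebraMap ℂ R3) c).IsHomogeneous 0 := by
      rw [algebraMap_eq]; exact isHomogeneous_C _ _
    have h2 : (v.prod fun i k => (u i) ^ k).IsHomogeneous (∑ i ∈ v.support, v i) := by
      apply IsHomogeneous.prod
      intro i _
      have := (hu i).pow (v i)
      rwa [one_mul] at this
    have h3 : (∑ i ∈ v.support, v i) = n := hv
    rw [h3] at h2
    have := h1.mul h2
    rwa [zero_add] at this
  have hsum : p = ∑ v ∈ p.support, monomial v (coeff v p) := (support_sum_monomial_coeff p).symm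
  rw [hsum, map_sum]
  apply IsHomogeneous.sum
  intro v hv
  refine hmono v ?_ (coeff v p)
  by_contra hc
  exact (mem_support_iff.mp hv) (hp.coeff_eq_zero hc)

lemma phi_isHomog (g : Matrix (Fin 3) (Fin 3) ℂ) {p : R3} {n : ℕ}
    (hp : p.IsHomogeneous n) : (phi g p).IsHomogeneous n := by
  apply subst_isHomog
  · intro i
    apply IsHomogeneous.sum
    intro j _
    have := (isHomogeneous_C (Fin 3) (g i j)).mul (isHomogeneous_X ℂ j)
    rwa [zero_add] at this
  · exact hp

lemma phi_homogComp (g : Matrix (Fin 3) (Fin 3) ℂ) (p : R3) (n : ℕ) :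
    homogeneousComponent n (phi g p) = phi g (homogeneousComponent n p) := by
  classical
  conv_lhs => rw [← sum_homogeneousComponent p]
  rw [map_sum, map_sum]
  have hterm : ∀ k, homogeneousComponent n ((phi g) (homogeneousComponent k p))
      = if n = k then (phi g) (homogeneousComponent k p) else 0 :=
    fun k => homogComp_of_isHomog (phi_isHomog g (homogeneousComponent_isHomogeneous k p))
  rw [Finset.sum_congr rfl (fun k _ => hterm k)]
  by_cases hn : n ≤ p.totalDegree
  · rw [Finset.sum_eq_single n (fun k _ hkne => if_neg (Ne.symm hkne)) (fun hh => by
      simp only [Finset.mem_range, not_lt] at hh; omega), if_pos rfl]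
  · rw [Finset.sum_eq_zero (fun k hk => by
      rw [if_neg (by simp only [Finset.mem_range] at hk; omega)])]
    rw [homogeneousComponent_eq_zero _ _ (by omega), map_zero]

lemma isHomogIdeal_matAct {g : Matrix (Fin 3) (Fin 3) ℂ} (hdet : IsUnit g.det)
    {J : Ideal R3} (hJ : IsHomogIdeal J) : IsHomogIdeal (matAct g J) := by
  intro f hf n
  rw [matAct_eq] at hf ⊢
  obtain ⟨p, hp, rfl⟩ := (Ideal.mem_map_iff_of_surjective _ (phi_surjective hdet)).mp hf
  rw [phi_homogComp]
  exact Ideal.mem_map_of_mem _ (hJ p hp n)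

/-! ### graded pieces and generation in low degrees -/

def Msub (N : Ideal R3) (e : ℕ) : Submodule ℂ R3 :=
  (Submodule.restrictScalars ℂ (N : Submodule R3 R3)) ⊓ homogeneousSubmodule (Fin 3) ℂ e

lemma mem_Msub {N : Ideal R3} {e : ℕ} {f : R3} :
    f ∈ Msub N e ↔ f ∈ N ∧ f.IsHomogeneous e := by
  rw [Msub, Submodule.mem_inf, Submodule.restrictScalars_mem, mem_homogeneousSubmodule]

def mulX (j : Fin 3) : R3 →ₗ[ℂ] R3 := LinearMap.mulLeft ℂ (X j)

lemma mulX_apply (j : Fin 3) (f : R3) : mulX j f = X j * f := rfl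

lemma monomial_factor_X {v : Fin 3 →₀ ℕ} {j : Fin 3} (hj : v j ≠ 0) (cf : ℂ) :
    monomial v cf = X j * monomial (v - Finsupp.single j 1) cf := by
  have hX : (X j : R3) = monomial (Finsupp.single j 1) 1 := rfl
  rw [hX, monomial_mul, one_mul]
  have harg : Finsupp.single j 1 + (v - Finsupp.single j 1) = v := by
    apply finsupp_ext3 <;>
    · rcases fin3_cases j with rfl | rfl | rfl <;>
        simp [Finsupp.tsub_apply, Finsupp.single_apply] <;> omega
  rw [harg]

lemma edeg_sub_single {v : Fin 3 →₀ ℕ} {j : Fin 3} (hj : v j ≠ 0) :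
    edeg (v - Finsupp.single j 1) + 1 = edeg v := by
  rw [edeg_eq3, edeg_eq3]
  rcases fin3_cases j with rfl | rfl | rfl <;>
    simp [Finsupp.tsub_apply, Finsupp.single_apply] <;>
    · have h0 := (edeg_eq3 v)
      omega

lemma gen_step {T : Set R3} {d : ℕ} (hT : ∀ t ∈ T, ∃ n, n ≤ d ∧ t.IsHomogeneous n)
    {f : R3} (hf : f ∈ Ideal.span T) {e : ℕ} (hfh : f.IsHomogeneous e) (hde : d < e) :
    f ∈ Submodule.map (mulX 0) (Msub (Ideal.span T) (e-1)) ⊔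
        Submodule.map (mulX 1) (Msub (Ideal.span T) (e-1)) ⊔
        Submodule.map (mulX 2) (Msub (Ideal.span T) (e-1)) := by
  classical
  set N := Ideal.span T with hN
  set Q := Submodule.map (mulX 0) (Msub N (e-1)) ⊔ Submodule.map (mulX 1) (Msub N (e-1)) ⊔
      Submodule.map (mulX 2) (Msub N (e-1)) with hQ
  have key : ∀ (q t : R3) (k nn : ℕ), q.IsHomogeneous k → t ∈ N → t.IsHomogeneous nn →
      k + nn = e → 1 ≤ k → q * t ∈ Q := by
    intro q t k nn hqh htN hth hkn hk1
    have hsum : q * t = ∑ v ∈ q.support, monomial v (coeff v q) * t := by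
      conv_lhs => rw [← support_sum_monomial_coeff q]
      rw [Finset.sum_mul]
    rw [hsum]
    apply Submodule.sum_mem
    intro v hv
    have hvdeg : edeg v = k := by
      by_contra hne
      exact mem_support_iff.mp hv (hqh.coeff_eq_zero (by rw [edeg_degree]; exact hne))
    have hj : ∃ j : Fin 3, v j ≠ 0 := by
      by_contra hc
      push_neg at hc
      have := edeg_eq3 v
      have h0 := hc 0; have h1 := hc 1; have h2 := hc 2
      omega
    obtain ⟨j, hj⟩ := hj
    rw [monomial_factor_X hj, mul_assoc]
    have hinner : monomial (v - Finsupp.single j 1) (coeff v q) * t ∈ Msub N (e-1) := by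
      rw [mem_Msub]
      constructor
      · exact Ideal.mul_mem_left _ _ htN
      · have hm : ((monomial (v - Finsupp.single j 1)) (coeff v q)).IsHomogeneous
            (edeg (v - Finsupp.single j 1)) := isHomogeneous_monomial _ (edeg_degree _)
        have := hm.mul hth
        have heq : edeg (v - Finsupp.single j 1) + nn = e - 1 := by
          have := edeg_sub_single hj
          omega
        rwa [heq] at this
    have hXj : X j * (monomial (v - Finsupp.single j 1) (coeff v q) * t)
        ∈ Submodule.map (mulX j) (Msub N (e-1)) :=
      ⟨_, hinner, rfl⟩
    rcases fin3_cases j with rfl | rfl | rfl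
    · exact Submodule.mem_sup_left (Submodule.mem_sup_left hXj)
    · exact Submodule.mem_sup_left (Submodule.mem_sup_right hXj)
    · exact Submodule.mem_sup_right hXj
  obtain ⟨n, c, gsub, hsum⟩ := Submodule.mem_span_set'.mp hf
  have hfc : f = homogeneousComponent e f := by
    rw [homogComp_of_isHomog hfh, if_pos rfl]
  rw [hfc, ← hsum, map_sum]
  apply Submodule.sum_mem
  intro ii _
  obtain ⟨nn, hnn, hth⟩ := hT (gsub ii) (gsub ii).2
  rw [smul_eq_mul, homogComp_mul_homog hth]
  by_cases hle : nn ≤ e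
  · rw [if_pos hle]
    exact key _ _ (e - nn) nn (homogeneousComponent_isHomogeneous _ _)
      (Ideal.subset_span (gsub ii).2) hth (by omega) (by omega)
  · rw [if_neg hle]
    exact Submodule.zero_mem _

lemma isHomogIdeal_span {T : Set R3} (hT : ∀ t ∈ T, ∃ n, t.IsHomogeneous n) :
    IsHomogIdeal (Ideal.span T) := by
  classical
  intro f hf m
  obtain ⟨n, c, gsub, hsum⟩ := Submodule.mem_span_set'.mp hf
  rw [← hsum, map_sum]
  apply Ideal.sum_mem
  intro ii _
  obtain ⟨nn, hth⟩ := hT (gsub ii) (gsub ii).2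
  rw [smul_eq_mul, homogComp_mul_homog hth]
  by_cases hle : nn ≤ m
  · rw [if_pos hle]
    exact Ideal.mul_mem_left _ _ (Ideal.subset_span (gsub ii).2)
  · rw [if_neg hle]
    exact Ideal.zero_mem _

lemma span_homog_eq {J : Ideal R3} (hhom : IsHomogIdeal J) (d : ℕ) :
    Ideal.span {f : R3 | f ∈ J ∧ f.totalDegree ≤ d} =
      Ideal.span {f : R3 | f ∈ J ∧ ∃ n, n ≤ d ∧ f.IsHomogeneous n} := by
  apply le_antisymm
  · rw [Ideal.span_le]
    rintro f ⟨hfJ, hfd⟩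
    have : f = ∑ k ∈ Finset.range (f.totalDegree + 1), homogeneousComponent k f :=
      (sum_homogeneousComponent f).symm
    rw [this]
    apply Ideal.sum_mem
    intro k hk
    apply Ideal.subset_span
    refine ⟨hhom f hfJ k, k, ?_, homogeneousComponent_isHomogeneous k f⟩
    simp only [Finset.mem_range] at hk
    omega
  · rw [Ideal.span_le]
    rintro f ⟨hfJ, n, hnd, hfh⟩
    exact Ideal.subset_span ⟨hfJ, hfh.totalDegree_le.trans hnd⟩

/-! ### setting x₃ = 0 -/

def piA : R3 →ₐ[ℂ] R3 := MvPolynomial.aeval (fun j : Fin 3 => if j = 2 then 0 else X j)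

lemma piA_monomial (v : Fin 3 →₀ ℕ) (c : ℂ) :
    piA (monomial v c) = if v 2 = 0 then monomial v c else 0 := by
  classical
  rw [piA, aeval_monomial]
  by_cases h2 : v 2 = 0
  · rw [if_pos h2]
    have hprod : (v.prod fun i k => (if i = (2:Fin 3) then (0:R3) else X i) ^ k)
        = v.prod fun i k => (X i) ^ k := by
      apply Finsupp.prod_congr
      intro i hi
      have : i ≠ 2 := by
        intro hc; subst hc
        exact (Finsupp.mem_support_iff.mp hi) h2
      rw [if_neg this]
    rw [hprod, algebraMap_eq, ← monomial_eq]
  · rw [if_neg h2]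
    have h2s : (2 : Fin 3) ∈ v.support := Finsupp.mem_support_iff.mpr h2
    have : (v.prod fun i k => (if i = (2:Fin 3) then (0:R3) else X i) ^ k) = 0 := by
      apply Finset.prod_eq_zero h2s
      show (if (2:Fin 3) = 2 then (0:R3) else X 2) ^ (v 2) = 0
      rw [if_pos rfl]
      exact zero_pow h2
    rw [this, mul_zero]

lemma piA_coeff (f : R3) (ν : Fin 3 →₀ ℕ) :
    coeff ν (piA f) = if ν 2 = 0 then coeff ν f else 0 := by
  classical
  have hterm : ∀ μ : Fin 3 →₀ ℕ, ∀ c : ℂ, coeff ν (piA (monomial μ c))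
      = if μ = ν ∧ ν 2 = 0 then c else 0 := by
    intro μ c
    rw [piA_monomial]
    by_cases hμ : μ 2 = 0
    · rw [if_pos hμ, coeff_monomial]
      by_cases he : μ = ν
      · subst he
        rw [if_pos rfl, if_pos ⟨rfl, hμ⟩]
      · rw [if_neg he, if_neg (fun hc => he hc.1)]
    · rw [if_neg hμ, coeff_zero]
      by_cases he : μ = ν
      · subst he
        rw [if_neg (fun hc => hμ hc.2)]
      · rw [if_neg (fun hc => he hc.1)]
  conv_lhs => rw [← support_sum_monomial_coeff f, map_sum]
  rw [show coeff ν (∑ v ∈ f.support, piA ((monomial v) (coeff v f)))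
      = ∑ v ∈ f.support, coeff ν (piA ((monomial v) (coeff v f))) from
    map_sum (lcoeff ℂ ν) _ _]
  rw [Finset.sum_congr rfl (fun μ _ => hterm μ (coeff μ f))]
  by_cases h2 : ν 2 = 0
  · rw [if_pos h2]
    have : ∀ μ ∈ f.support, (if μ = ν ∧ ν 2 = 0 then coeff μ f else 0)
        = if μ = ν then coeff μ f else 0 := by
      intro μ _
      by_cases he : μ = ν
      · rw [if_pos ⟨he, h2⟩, if_pos he]
      · rw [if_neg (fun hc => he hc.1), if_neg he]
    rw [Finset.sum_congr rfl this, Finset.sum_ite_eq' f.support ν (fun μ => coeff μ f)]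
    by_cases hs : ν ∈ f.support
    · rw [if_pos hs]
    · rw [if_neg hs]
      exact (notMem_support_iff.mp hs).symm
  · rw [if_neg h2]
    apply Finset.sum_eq_zero
    intro μ _
    rw [if_neg (fun hc => h2 hc.2)]

lemma piA_isHomog {p : R3} {n : ℕ} (hp : p.IsHomogeneous n) : (piA p).IsHomogeneous n := by
  apply subst_isHomog
  · intro i
    rcases fin3_cases i with rfl | rfl | rfl
    · rw [show (if (0:Fin 3) = 2 then (0:R3) else X 0) = X 0 from if_neg (by decide)]
      exact isHomogeneous_X _ _
    · rw [show (if (1:Fin 3) = 2 then (0:R3) else X 1) = X 1 from if_neg (by decide)]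
      exact isHomogeneous_X _ _
    · rw [show (if (2:Fin 3) = 2 then (0:R3) else X 2) = 0 from if_pos rfl]
      exact isHomogeneous_zero _ _ _
  · exact hp

lemma piA_X0 : piA (X 0) = X 0 := by
  rw [piA, aeval_X]; exact if_neg (by decide)
lemma piA_X1 : piA (X 1) = X 1 := by
  rw [piA, aeval_X]; exact if_neg (by decide)
lemma piA_X2 : piA (X 2) = 0 := by
  rw [piA, aeval_X]; exact if_pos rfl

/-! ### finiteness and rank estimates -/

lemma finite_degset (e : ℕ) : {v : Fin 3 →₀ ℕ | edeg v = e}.Finite := by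
  classical
  have hsub : {v : Fin 3 →₀ ℕ | edeg v = e} ⊆
      (fun v : Fin 3 →₀ ℕ => (v 0, v 1, v 2)) ⁻¹' (Set.Iic (e,e,e)) := by
    intro v hv
    simp only [Set.mem_setOf_eq] at hv
    have := edeg_eq3 v
    simp only [Set.mem_preimage, Set.mem_Iic, Prod.le_def]
    omega
  apply Set.Finite.subset _ hsub
  apply Set.Finite.preimage
  · intro a _ b _ hab
    simp only [Prod.mk.injEq] at hab
    exact finsupp_ext3 hab.1 hab.2.1 hab.2.2
  · exact Set.finite_Iic _

lemma fd_homogSub (e : ℕ) :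
    FiniteDimensional ℂ (homogeneousSubmodule (Fin 3) ℂ e) := by
  have hle : homogeneousSubmodule (Fin 3) ℂ e ≤
      Submodule.span ℂ ((fun v => monomial v (1:ℂ)) '' {v : Fin 3 →₀ ℕ | edeg v = e}) := by
    intro p hp
    rw [mem_homogeneousSubmodule] at hp
    have : p = ∑ v ∈ p.support, monomial v (coeff v p) := (support_sum_monomial_coeff p).symm
    rw [this]
    apply Submodule.sum_mem
    intro v hv
    have hvd : edeg v = e := by
      by_contra hne
      exact mem_support_iff.mp hv (hp.coeff_eq_zero (by rw [edeg_degree]; exact hne))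
    have : monomial v (coeff v p) = (coeff v p) • monomial v (1:ℂ) := by
      rw [smul_monomial, smul_eq_mul, mul_one]
    rw [this]
    exact Submodule.smul_mem _ _ (Submodule.subset_span ⟨v, hvd, rfl⟩)
  have : FiniteDimensional ℂ (Submodule.span ℂ
      ((fun v => monomial v (1:ℂ)) '' {v : Fin 3 →₀ ℕ | edeg v = e})) :=
    FiniteDimensional.span_of_finite ℂ ((finite_degset e).image _)
  exact Submodule.finiteDimensional_of_le hle

lemma fd_of_le_homog {W : Submodule ℂ R3} {e : ℕ}
    (h : W ≤ homogeneousSubmodule (Fin 3) ℂ e) : FiniteDimensional ℂ W := by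
  have := fd_homogSub e
  exact Submodule.finiteDimensional_of_le h

lemma finrank_le_of_witness {W : Submodule ℂ R3} [FiniteDimensional ℂ W] {m : ℕ}
    (mset : Fin m → (Fin 3 →₀ ℕ))
    (hwit : ∀ q ∈ W, q ≠ 0 → ∃ jj : Fin m, coeff (mset jj) q ≠ 0) :
    Module.finrank ℂ W ≤ m := by
  classical
  set Θ : W →ₗ[ℂ] (Fin m → ℂ) :=
    LinearMap.pi (fun jj : Fin m => (lcoeff ℂ (mset jj)).comp W.subtype) with hΘ
  have hinj : Function.Injective Θ := by
    rw [← LinearMap.ker_eq_bot]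
    rw [Submodule.eq_bot_iff]
    intro q hq
    rw [LinearMap.mem_ker] at hq
    by_contra hne
    have hqv : (q : R3) ≠ 0 := fun hc => hne (Subtype.ext hc)
    obtain ⟨jj, hjj⟩ := hwit q q.2 hqv
    apply hjj
    have := congrFun hq jj
    simpa [hΘ] using this
  have := LinearMap.finrank_le_finrank_of_injective hinj
  simpa [Module.finrank_fintype_fun_eq_card] using this

lemma finrank_ge_of_family {W : Submodule ℂ R3} [FiniteDimensional ℂ W] {m : ℕ}
    (mset : Fin m → (Fin 3 →₀ ℕ)) (q : Fin m → R3)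
    (hq : ∀ jj, q jj ∈ W)
    (hdiag : ∀ jj, coeff (mset jj) (q jj) ≠ 0)
    (hlow : ∀ jj kk : Fin m, kk < jj → coeff (mset kk) (q jj) = 0) :
    m ≤ Module.finrank ℂ W := by
  classical
  have hliR : LinearIndependent ℂ q := by
    rw [linearIndependent_iff']
    intro s g hsum jj hjjs
    by_contra hne
    set T := s.filter (fun x => g x ≠ 0) with hT
    have hTne : T.Nonempty := ⟨jj, by simp [hT, hjjs, hne]⟩
    set i0 := T.min' hTne with hi0
    have hi0T : i0 ∈ T := T.min'_mem hTne
    have hi0s : i0 ∈ s := (Finset.mem_filter.mp hi0T).1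
    have hg0 : g i0 ≠ 0 := (Finset.mem_filter.mp hi0T).2
    have hco : (0:ℂ) = ∑ x ∈ s, g x * coeff (mset i0) (q x) := by
      have : coeff (mset i0) (∑ x ∈ s, g x • q x) = ∑ x ∈ s, g x * coeff (mset i0) (q x) := by
        rw [show coeff (mset i0) (∑ x ∈ s, g x • q x)
            = (lcoeff ℂ (mset i0)) (∑ x ∈ s, g x • q x) from rfl, map_sum]
        apply Finset.sum_congr rfl
        intro x _
        rw [map_smul]
        simp [smul_eq_mul]
      rw [← this, hsum, coeff_zero]
    rw [Finset.sum_eq_single i0 (fun x hxs hxne => ?_) (fun hc => absurd hi0s hc)] at hco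
    · exact (mul_ne_zero hg0 (hdiag i0)) hco.symm
    · by_cases hgx : g x = 0
      · rw [hgx, zero_mul]
      · have hxT : x ∈ T := Finset.mem_filter.mpr ⟨hxs, hgx⟩
        have : i0 ≤ x := T.min'_le x hxT
        have hlt : i0 < x := lt_of_le_of_ne this (Ne.symm hxne)
        rw [hlow x i0 hlt, mul_zero]
  have hli : LinearIndependent ℂ (fun jj : Fin m => (⟨q jj, hq jj⟩ : W)) := by
    apply LinearIndependent.of_comp W.subtype
    convert hliR
    rfl
  have := hli.fintype_card_le_finrank
  simpa using this

lemma mulX_injective (j : Fin 3) : Function.Injective (mulX j) := by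
  intro a b hab
  exact mul_left_cancel₀ (X_ne_zero j) hab

lemma finrank_map_mulX (j : Fin 3) (W : Submodule ℂ R3) :
    Module.finrank ℂ (Submodule.map (mulX j) W) = Module.finrank ℂ W :=
  (LinearEquiv.finrank_eq (Submodule.equivMapOfInjective _ (mulX_injective j) W)).symm

lemma fd_map_mulX (j : Fin 3) (W : Submodule ℂ R3) [FiniteDimensional ℂ W] :
    FiniteDimensional ℂ (Submodule.map (mulX j) W) :=
  LinearEquiv.finiteDimensional (Submodule.equivMapOfInjective _ (mulX_injective j) W)

lemma finrank_step (Ve1 Ve Vem : Submodule ℂ R3) [FiniteDimensional ℂ Ve]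
    [FiniteDimensional ℂ Ve1] [FiniteDimensional ℂ Vem]
    (hse : Ve1 = Submodule.map (mulX 0) Ve ⊔ Submodule.map (mulX 1) Ve)
    (h0 : Submodule.map (mulX 0) Vem ≤ Ve)
    (h1 : Submodule.map (mulX 1) Vem ≤ Ve) :
    Module.finrank ℂ Ve1 + Module.finrank ℂ Vem ≤ 2 * Module.finrank ℂ Ve := by
  set A := Submodule.map (mulX 0) Ve with hA
  set B := Submodule.map (mulX 1) Ve with hB
  have hfdA : FiniteDimensional ℂ A := fd_map_mulX 0 Ve
  have hfdB : FiniteDimensional ℂ B := fd_map_mulX 1 Ve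
  have hsupinf : Module.finrank ℂ (A ⊔ B : Submodule ℂ R3)
      + Module.finrank ℂ (A ⊓ B : Submodule ℂ R3)
      = Module.finrank ℂ A + Module.finrank ℂ B :=
    Submodule.finrank_sup_add_finrank_inf_eq A B
  have hAr : Module.finrank ℂ A = Module.finrank ℂ Ve := finrank_map_mulX 0 Ve
  have hBr : Module.finrank ℂ B = Module.finrank ℂ Ve := finrank_map_mulX 1 Ve
  have hint : Submodule.map ((mulX 0).comp (mulX 1)) Vem ≤ A ⊓ B := by
    rintro x ⟨c, hc, rfl⟩
    constructor
    · exact ⟨X 1 * c, h1 ⟨c, hc, mulX_apply 1 c⟩, by rw [LinearMap.comp_apply, mulX_apply 1 c]⟩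
    · refine ⟨X 0 * c, h0 ⟨c, hc, mulX_apply 0 c⟩, ?_⟩
      show X 1 * (X 0 * c) = X 0 * (X 1 * c)
      ring
  have hfdAB : FiniteDimensional ℂ (A ⊓ B : Submodule ℂ R3) :=
    Submodule.finiteDimensional_of_le inf_le_left
  have hcompinj : Function.Injective ((mulX 0).comp (mulX 1)) :=
    (mulX_injective 0).comp (mulX_injective 1)
  have hrint : Module.finrank ℂ Vem ≤ Module.finrank ℂ (A ⊓ B : Submodule ℂ R3) := by
    have heq : Module.finrank ℂ (Submodule.map ((mulX 0).comp (mulX 1)) Vem)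
        = Module.finrank ℂ Vem :=
      (LinearEquiv.finrank_eq (Submodule.equivMapOfInjective _ hcompinj Vem)).symm
    rw [← heq]
    exact Submodule.finrank_mono hint
  rw [hse]
  omega

end GinAux


/-- Let `J ⊆ ℂ[x₁,x₂,x₃]` be a homogeneous ideal whose generic initial ideal `G` contains
a power of `x₁` and a power of `x₂`.  Set `s = min{a : x₁^a ∈ G}` and
`ν_a = min{b : x₁^a x₂^b ∈ G}`.  If `0 ≤ i < s − 1` and `ν_{i+1} + 2 < ν_i`, and `K ⊆ J`
is the ideal generated by all elements of `J` of degree `≤ i + ν_{i+1} + 2`, then every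
monomial in the generic initial ideal of `K` is divisible by `x₁^{i+1}`. -/
theorem split_nonconnected_ideal
    (J G : Ideal (MvPolynomial (Fin 3) ℂ)) (hhom : IsHomogIdeal J)
    (hG : IsGinOf J G)
    (hx1 : ∃ a : ℕ, monomialMem (Finsupp.single 0 a) G)
    (hx2 : ∃ b : ℕ, monomialMem (Finsupp.single 1 b) G)
    (s : ℕ) (hs : s = sInf {a : ℕ | monomialMem (Finsupp.single 0 a) G})
    (ν : ℕ → ℕ)
    (hν : ∀ a, ν a = sInf {b : ℕ | monomialMem (Finsupp.single 0 a + Finsupp.single 1 b) G})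
    (i : ℕ) (hi : i + 1 < s) (hgap : ν (i + 1) + 2 < ν i)
    (K : Ideal (MvPolynomial (Fin 3) ℂ))
    (hK : K = Ideal.span {f | f ∈ J ∧ f.totalDegree ≤ i + ν (i + 1) + 2})
    (GK : Ideal (MvPolynomial (Fin 3) ℂ)) (hGK : IsGinOf K GK) :
    ∀ μ : Fin 3 →₀ ℕ, monomialMem μ GK → i + 1 ≤ μ 0 := by
  classical
  open GinAux in
  obtain ⟨hGB, P₁, hP₁, H₁⟩ := hG
  obtain ⟨hGKB, P₂, hP₂, H₂⟩ := hGK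
  set d : ℕ := i + ν (i + 1) + 2 with hd
  -- ### Step A: choose a matrix g that is generic for both J and K
  set Mdet : Matrix (Fin 3) (Fin 3) (MvPolynomial (Fin 3 × Fin 3) ℂ) :=
    Matrix.of (fun p q => (X (p,q) : MvPolynomial (Fin 3 × Fin 3) ℂ)) with hMdet
  have hdetP : ∀ x : Fin 3 × Fin 3 → ℂ,
      MvPolynomial.eval x Mdet.det = (Matrix.of fun a b => x (a,b)).det := by
    intro x
    rw [RingHom.map_det (MvPolynomial.eval x) Mdet]
    congr 1
    ext a b
    simp [hMdet]
  have hdetne : Mdet.det ≠ 0 := by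
    intro hc
    have h1 := hdetP (fun pq => if pq.1 = pq.2 then (1:ℂ) else 0)
    rw [hc, map_zero] at h1
    have h2 : (Matrix.of fun a b => if a = b then (1:ℂ) else 0) = (1 : Matrix (Fin 3) (Fin 3) ℂ) := by
      ext a b
      simp [Matrix.one_apply]
    rw [h2, Matrix.det_one] at h1
    exact one_ne_zero h1.symm
  have hQne : P₁ * P₂ * Mdet.det ≠ 0 :=
    mul_ne_zero (mul_ne_zero hP₁ hP₂) hdetne
  have hpoint : ∃ x : Fin 3 × Fin 3 → ℂ, MvPolynomial.eval x (P₁ * P₂ * Mdet.det) ≠ 0 := by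
    by_contra hc
    push_neg at hc
    exact hQne (MvPolynomial.funext (fun x => by rw [hc x, map_zero]))
  obtain ⟨x, hx⟩ := hpoint
  rw [map_mul, map_mul] at hx
  set g : Matrix (Fin 3) (Fin 3) ℂ := Matrix.of (fun a b => x (a,b)) with hg
  have hxg : (fun p : Fin 3 × Fin 3 => g p.1 p.2) = x := by
    funext p
    show x (p.1, p.2) = x p
    congr
  have hdet : IsUnit g.det := by
    apply isUnit_iff_ne_zero.mpr
    rw [← hdetP x]
    intro hc
    rw [hc, mul_zero] at hx
    exact hx rfl
  have hP₁x : MvPolynomial.eval (fun p : Fin 3 × Fin 3 => g p.1 p.2) P₁ ≠ 0 := by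
    rw [hxg]; intro hc; rw [hc] at hx; simpa using hx
  have hP₂x : MvPolynomial.eval (fun p : Fin 3 × Fin 3 => g p.1 p.2) P₂ ≠ 0 := by
    rw [hxg]; intro hc; rw [hc] at hx; simpa using hx
  have hI : initialIdeal (matAct g J) = G := H₁ g hdet hP₁x
  have hM : initialIdeal (matAct g K) = GK := H₂ g hdet hP₂x
  set I : Ideal R3 := matAct g J with hIdef
  set M : Ideal R3 := matAct g K with hMdef
  -- ### basic inclusions
  have hKJ : K ≤ J := by
    rw [hK]
    exact Ideal.span_le.mpr (fun f hf => hf.1)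
  have hMI : M ≤ I := Ideal.map_mono hKJ
  have hGKG : GK ≤ G := by
    rw [← hI, ← hM]
    exact initialIdeal_mono hMI
  -- ### Step 0 : ν facts
  have nu_nonempty : ∀ a : ℕ, ∃ b, monomialMem (mono3 a b 0) G := by
    obtain ⟨b₀, hb₀⟩ := hx2
    intro a
    refine ⟨b₀, ?_⟩
    have := monomialMem_mul_single hb₀ (Finsupp.single 0 a)
    rwa [show Finsupp.single 0 a + Finsupp.single 1 b₀ = mono3 a b₀ 0 from
      (mono3_single01 a b₀).symm] at this
  have hν' : ∀ a, ν a = sInf {b | monomialMem (mono3 a b 0) G} := by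
    intro a
    rw [hν a]
    congr 1
    ext b
    simp only [Set.mem_setOf_eq, mono3_single01]
  have nu_mem : ∀ a, monomialMem (mono3 a (ν a) 0) G := by
    intro a
    rw [hν' a]
    exact Nat.sInf_mem (nu_nonempty a)
  have nu_le : ∀ a b, monomialMem (mono3 a b 0) G → ν a ≤ b := by
    intro a b hb
    rw [hν' a]
    exact Nat.sInf_le hb
  have s_le : ∀ a, monomialMem (Finsupp.single 0 a) G → s ≤ a := by
    intro a ha
    rw [hs]
    exact Nat.sInf_le ha
  have nu_pos : ∀ a, a < s → 1 ≤ ν a := by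
    intro a ha
    by_contra h
    have h0 : ν a = 0 := by omega
    have hmm := nu_mem a
    rw [h0, mono3_single0] at hmm
    exact absurd (s_le a hmm) (by omega)
  have nu_step : ∀ a, 1 ≤ ν a → ν (a+1) + 1 ≤ ν a := by
    intro a h1
    have hmv := borel_1to0 hGB 1 (nu_mem a) h1
    have hle := nu_le (a+1) (ν a - 1) hmv
    omega
  have nu_chain : ∀ t a, a + t = i → ν i + t ≤ ν a := by
    intro t
    induction t with
    | zero =>
      intro a ha
      have : a = i := by omega
      subst this
      omega
    | succ t ih =>
      intro a ha
      have h1 := ih (a+1) (by omega)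
      have h2 := nu_step a (nu_pos a (by omega))
      omega
  have star : ∀ a, a ≤ i → d + 1 ≤ a + ν a := by
    intro a ha
    have := nu_chain (i - a) a (by omega)
    omega
  -- ### Step 2 : monomials of G of degree ≤ d are divisible by x₁^{i+1}
  have G_low : ∀ μ : Fin 3 →₀ ℕ, monomialMem μ G → edeg μ ≤ d → i + 1 ≤ μ 0 := by
    intro μ hμ hdeg
    by_contra hc
    push_neg at hc
    have h1 : monomialMem (mono3 (μ 0) (μ 1 + μ 2) 0) G := by
      have := borel_2to1 hGB (show monomialMem (mono3 (μ 0) (μ 1) (μ 2)) G from by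
        rwa [← eq_mono3])
      exact this
    have h2 := nu_le _ _ h1
    have h3 := star (μ 0) (by omega)
    have h4 := edeg_eq3 μ
    omega
  -- ### homogeneity of all relevant ideals
  have hIhom : IsHomogIdeal I := isHomogIdeal_matAct hdet hhom
  set TK : Set R3 := {f : R3 | f ∈ J ∧ ∃ n, n ≤ d ∧ f.IsHomogeneous n} with hTK
  have hKspan : K = Ideal.span TK := by
    rw [hK]
    exact span_homog_eq hhom d
  set TM : Set R3 := (phi g) '' TK with hTM
  have hMspan : M = Ideal.span TM := by
    rw [hMdef, matAct_eq, hKspan, Ideal.map_span]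
  have hTMhomg : ∀ t ∈ TM, ∃ n, n ≤ d ∧ t.IsHomogeneous n := by
    rintro t ⟨t₀, ⟨ht₀J, n, hnd, hh⟩, rfl⟩
    exact ⟨n, hnd, phi_isHomog g hh⟩
  have hMhom : IsHomogIdeal M := by
    rw [hMspan]
    exact isHomogIdeal_span (fun t ht => by
      obtain ⟨n, _, hh⟩ := hTMhomg t ht
      exact ⟨n, hh⟩)
  -- ### low-degree homogeneous elements of I are in M
  have I_low_mem_M : ∀ f : R3, f ∈ I → ∀ n, n ≤ d → f.IsHomogeneous n → f ∈ M := by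
    intro f hf n hnd hfh
    rw [hIdef, matAct_eq] at hf
    obtain ⟨p, hpJ, hpf⟩ := (Ideal.mem_map_iff_of_surjective _ (phi_surjective hdet)).mp hf
    have hp' : p = phi g⁻¹ f := by
      rw [← hpf, phi_cancel' hdet]
    have hph : p.IsHomogeneous n := by
      rw [hp']
      exact phi_isHomog g⁻¹ hfh
    have hpK : p ∈ K := by
      rw [hKspan]
      exact Ideal.subset_span ⟨hpJ, n, hnd, hph⟩
    rw [hMdef, matAct_eq, ← hpf]
    exact Ideal.mem_map_of_mem _ hpK
  -- ### the graded pieces of the image of M under x₃ ↦ 0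
  set V : ℕ → Submodule ℂ R3 := fun e => Submodule.map (piA.toLinearMap) (Msub M e) with hV
  have hVmem : ∀ e (q : R3), q ∈ V e ↔ ∃ f, (f ∈ M ∧ f.IsHomogeneous e) ∧ piA f = q := by
    intro e q
    rw [hV]
    simp only [Submodule.mem_map]
    constructor
    · rintro ⟨f, hf, rfl⟩
      exact ⟨f, mem_Msub.mp hf, rfl⟩
    · rintro ⟨f, hf, rfl⟩
      exact ⟨f, mem_Msub.mpr hf, rfl⟩
  have fdV : ∀ e, FiniteDimensional ℂ (V e) := by
    intro e
    apply fd_of_le_homog (e := e)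
    intro q hq
    obtain ⟨f, ⟨_, hfh⟩, rfl⟩ := (hVmem e q).mp hq
    rw [mem_homogeneousSubmodule]
    exact piA_isHomog hfh
  set nV : ℕ → ℕ := fun e => Module.finrank ℂ (V e) with hnV
  -- ### bridge 1 : nonzero elements of V e give monomials of GK
  have bridge1 : ∀ e (q : R3), q ∈ V e → q ≠ 0 →
      ∃ β, β ≤ e ∧ monomialMem (mono3 (e-β) β 0) GK ∧ coeff (mono3 (e-β) β 0) q ≠ 0 := by
    intro e q hq hq0
    obtain ⟨f, ⟨hfM, hfh⟩, rfl⟩ := (hVmem e q).mp hq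
    have hf0 : f ≠ 0 := by
      intro hc
      rw [hc, map_zero] at hq0
      exact hq0 rfl
    obtain ⟨μ, hLM⟩ := exists_isLeadMonOf hf0
    -- pick an x₃-free element of the support of piA f
    have hsupne : (piA f).support.Nonempty := support_nonempty.mpr hq0
    obtain ⟨ξ, hξ⟩ := hsupne
    have hξco := mem_support_iff.mp hξ
    rw [piA_coeff] at hξco
    have hξ2 : ξ 2 = 0 := by
      by_contra hc
      rw [if_neg hc] at hξco
      exact hξco rfl
    rw [if_pos hξ2] at hξco
    have hξf : ξ ∈ f.support := mem_support_iff.mpr hξco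
    -- the lead monomial of f is x₃-free
    have hμ2 : μ 2 = 0 := by
      by_contra hc
      rcases eq_or_ne ξ μ with rfl | hne
      · exact hc hξ2
      · have hlt := hLM.2 ξ hξf hne
        rw [DRLlt_iff] at hlt
        have he1 : edeg ξ = e := isHomog_edeg_of_mem_support hfh hξf
        have he2 : edeg μ = e := isHomog_edeg_of_mem_support hfh hLM.1
        omega
    have hμe : edeg μ = e := isHomog_edeg_of_mem_support hfh hLM.1
    have hμ3 := edeg_eq3 μ
    have hμeq : μ = mono3 (e - μ 1) (μ 1) 0 := by
      apply finsupp_ext3 <;> simp <;> omega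
    refine ⟨μ 1, by omega, ?_, ?_⟩
    · rw [← hM, ← hμeq]
      exact monomialMem_of_lead hfM hLM (le_refl μ)
    · rw [← hμeq, piA_coeff, if_pos hμ2]
      exact mem_support_iff.mp hLM.1
  -- ### bridge 2 : monomials of GK give elements of V e
  have bridge2 : ∀ e a β, a + β = e → monomialMem (mono3 a β 0) GK →
      ∃ q : R3, q ∈ V e ∧ coeff (mono3 a β 0) q ≠ 0 ∧
        ∀ ξ ∈ q.support, ξ 2 = 0 ∧ edeg ξ = e ∧ β ≤ ξ 1 := by
    intro e a β hsum hmem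
    rw [← hM] at hmem
    obtain ⟨f, hfM, hfh, hLM⟩ := monomialMem_initialIdeal_homog hMhom hmem
    have hedeg : edeg (mono3 a β 0) = e := by simp; omega
    rw [hedeg] at hfh
    refine ⟨piA f, (hVmem e _).mpr ⟨f, ⟨hfM, hfh⟩, rfl⟩, ?_, ?_⟩
    · rw [piA_coeff, if_pos (by simp)]
      exact mem_support_iff.mp hLM.1
    · intro ξ hξ
      have hξco := mem_support_iff.mp hξ
      rw [piA_coeff] at hξco
      have hξ2 : ξ 2 = 0 := by
        by_contra hc
        rw [if_neg hc] at hξco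
        exact hξco rfl
      rw [if_pos hξ2] at hξco
      have hξf : ξ ∈ f.support := mem_support_iff.mpr hξco
      have hξe : edeg ξ = e := isHomog_edeg_of_mem_support hfh hξf
      refine ⟨hξ2, hξe, ?_⟩
      rcases eq_or_ne ξ (mono3 a β 0) with rfl | hne
      · simp
      · have hlt := hLM.2 ξ hξf hne
        rw [DRLlt_iff] at hlt
        have : edeg (mono3 a β 0) = e := by simp; omega
        simp only [mono3_apply1, mono3_apply2] at hlt
        omega
  -- ### GK monomial intervals
  have GK_interval : ∀ a β γ, monomialMem (mono3 a β 0) GK → γ ≤ β →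
      monomialMem (mono3 (a + (β - γ)) γ 0) GK := by
    intro a β γ hmem hγ
    have := borel_1to0 hGKB (β - γ) hmem (by omega)
    rwa [show β - (β - γ) = γ from by omega] at this
  -- ### lower bound on ranks from families of elements
  have rank_lower : ∀ e a β, a + β = e → monomialMem (mono3 a β 0) GK → β + 1 ≤ nV e := by
    intro e a β hsum hmem
    have hmemγ : ∀ γ : ℕ, γ ≤ β → monomialMem (mono3 (e - γ) γ 0) GK := by
      intro γ hγ
      have := GK_interval a β γ hmem hγ
      rwa [show a + (β - γ) = e - γ from by omega] at this
    have hbr : ∀ jj : Fin (β+1), ∃ q : R3, q ∈ V e ∧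
        coeff (mono3 (e - (jj:ℕ)) (jj:ℕ) 0) q ≠ 0 ∧
        ∀ ξ ∈ q.support, ξ 2 = 0 ∧ edeg ξ = e ∧ (jj:ℕ) ≤ ξ 1 := by
      intro jj
      have hj : (jj : ℕ) ≤ β := by omega
      exact bridge2 e (e - jj) jj (by omega) (hmemγ jj hj)
    choose qf hq1 hq2 hq3 using hbr
    have := fdV e
    have := finrank_ge_of_family (W := V e)
      (mset := fun jj : Fin (β+1) => mono3 (e - (jj:ℕ)) (jj:ℕ) 0) qf hq1 hq2 (by
        intro jj kk hlt
        by_contra hne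
        have hsup : mono3 (e - (kk:ℕ)) (kk:ℕ) 0 ∈ (qf jj).support := mem_support_iff.mpr hne
        have h3 := (hq3 jj _ hsup).2.2
        simp only [mono3_apply1] at h3
        have : (kk:ℕ) < (jj:ℕ) := hlt
        omega)
    exact this
  -- ### upper bound on ranks in low degrees
  have rank_upper_low : ∀ e, e ≤ d → nV e ≤ e - i := by
    intro e he
    have := fdV e
    apply finrank_le_of_witness (W := V e) (m := e - i)
      (mset := fun jj : Fin (e-i) => mono3 (e - (jj:ℕ)) (jj:ℕ) 0)
    intro q hq hq0
    obtain ⟨β, hβe, hmem, hco⟩ := bridge1 e q hq hq0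
    have hmemG : monomialMem (mono3 (e-β) β 0) G := hGKG hmem
    have h1 : i + 1 ≤ e - β := by
      have := G_low _ hmemG (by simp; omega)
      simpa using this
    have hβlt : β < e - i := by omega
    exact ⟨⟨β, hβlt⟩, hco⟩
  -- ### the two initial values
  have hmem_d1 : monomialMem (mono3 (i+1) (ν (i+1)) 0) GK := by
    have hGm : monomialMem (mono3 (i+1) (ν (i+1)) 0) G := nu_mem (i+1)
    rw [← hI] at hGm
    obtain ⟨f, hfI, hfh, hlm⟩ := monomialMem_initialIdeal_homog hIhom hGm
    have hdeg : edeg (mono3 (i+1) (ν (i+1)) 0) = d - 1 := by simp; omega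
    rw [hdeg] at hfh
    have hfM : f ∈ M := I_low_mem_M f hfI (d-1) (by omega) hfh
    rw [← hM]
    exact monomialMem_of_lead hfM hlm (le_refl _)
  have hmem_d : monomialMem (mono3 (i+1) (ν (i+1) + 1) 0) GK := by
    have := monomialMem_mul_single hmem_d1 (Finsupp.single 1 1)
    rwa [show Finsupp.single 1 1 + mono3 (i+1) (ν (i+1)) 0 = mono3 (i+1) (ν (i+1)+1) 0 from
      finsupp_ext3 (by simp [Finsupp.add_apply, Finsupp.single_apply])
        (by simp [Finsupp.add_apply, Finsupp.single_apply]; omega)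
        (by simp [Finsupp.add_apply, Finsupp.single_apply])] at this
  have hn_d1_ge : ν (i+1) + 1 ≤ nV (d-1) := rank_lower (d-1) (i+1) (ν (i+1)) (by omega) hmem_d1
  have hn_d1_le : nV (d-1) ≤ (d-1) - i := rank_upper_low (d-1) (by omega)
  have hn_d_ge : ν (i+1) + 2 ≤ nV d := rank_lower d (i+1) (ν (i+1)+1) (by omega) hmem_d
  have hn_d_le : nV d ≤ d - i := rank_upper_low d (le_refl d)
  -- ### the recursion V (e+1) = x₁ V e + x₂ V e for e ≥ d
  have hVabsorb : ∀ e, ∀ j : Fin 3, j ≠ 2 → Submodule.map (mulX j) (V e) ≤ V (e+1) := by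
    intro e j hj
    rintro x ⟨y, hy, rfl⟩
    obtain ⟨f, ⟨hfM, hfh⟩, rfl⟩ := (hVmem e y).mp hy
    have hXf : X j * f ∈ M := Ideal.mul_mem_left _ _ hfM
    have hXfh : (X j * f).IsHomogeneous (e+1) := by
      have := (isHomogeneous_X ℂ j).mul hfh
      rwa [add_comm 1 e] at this
    have hpij : piA (X j) = X j := by
      rcases fin3_cases j with rfl | rfl | rfl
      · exact piA_X0
      · exact piA_X1
      · exact absurd rfl hj
    refine (hVmem (e+1) _).mpr ⟨X j * f, ⟨hXf, hXfh⟩, ?_⟩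
    rw [map_mul, hpij]
    rfl
  have hVsucc : ∀ e, d ≤ e → V (e+1) =
      Submodule.map (mulX 0) (V e) ⊔ Submodule.map (mulX 1) (V e) := by
    intro e he
    apply le_antisymm
    · rintro x hx
      obtain ⟨f, ⟨hfM, hfh⟩, rfl⟩ := (hVmem (e+1) x).mp hx
      have hfspan : f ∈ Ideal.span TM := by rw [← hMspan]; exact hfM
      have hgen := gen_step hTMhomg hfspan hfh (by omega)
      rw [← hMspan] at hgen
      rw [show e + 1 - 1 = e from by omega] at hgen
      obtain ⟨ab, hab, cc, hcc, rfl⟩ := Submodule.mem_sup.mp hgen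
      obtain ⟨aa, haa, bb, hbb, rfl⟩ := Submodule.mem_sup.mp hab
      obtain ⟨fa, hfa, rfl⟩ := haa
      obtain ⟨fb, hfb, rfl⟩ := hbb
      obtain ⟨fc, hfc, rfl⟩ := hcc
      rw [map_add, map_add]
      apply Submodule.add_mem
      · apply Submodule.add_mem
        · apply Submodule.mem_sup_left
          refine ⟨piA fa, ⟨fa, hfa, rfl⟩, ?_⟩
          show X 0 * piA fa = piA (mulX 0 fa)
          rw [mulX_apply, map_mul, piA_X0]
        · apply Submodule.mem_sup_right
          refine ⟨piA fb, ⟨fb, hfb, rfl⟩, ?_⟩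
          show X 1 * piA fb = piA (mulX 1 fb)
          rw [mulX_apply, map_mul, piA_X1]
      · have : piA (mulX 2 fc) = 0 := by
          rw [mulX_apply, map_mul, piA_X2, zero_mul]
        rw [this]
        exact Submodule.zero_mem _
    · apply sup_le
      · exact hVabsorb e 0 (by decide)
      · exact hVabsorb e 1 (by decide)
  have hstep : ∀ e, d ≤ e → nV (e+1) + nV (e-1) ≤ 2 * nV e := by
    intro e he
    have h1 := hVsucc e he
    have h2 : Submodule.map (mulX 0) (V (e-1)) ≤ V e := by
      have := hVabsorb (e-1) 0 (by decide)
      rwa [show e - 1 + 1 = e from by omega] at this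
    have h3 : Submodule.map (mulX 1) (V (e-1)) ≤ V e := by
      have := hVabsorb (e-1) 1 (by decide)
      rwa [show e - 1 + 1 = e from by omega] at this
    have := fdV e; have := fdV (e+1); have := fdV (e-1)
    exact finrank_step (V (e+1)) (V e) (V (e-1)) h1 h2 h3
  -- ### the chain of inequalities
  have chain : ∀ k : ℕ, nV (d + k) ≤ (d - i) + k ∧ nV (d + k + 1) ≤ nV (d + k) + 1 := by
    intro k
    induction k with
    | zero =>
      constructor
      · simpa using hn_d_le
      · have h1 := hstep d (le_refl d)
        simp only [add_zero]
        omega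
    | succ k ih =>
      have h1 := hstep (d + k + 1) (by omega)
      rw [show d + k + 1 - 1 = d + k from by omega] at h1
      constructor
      · have := ih.1; have := ih.2
        rw [show d + (k+1) = d + k + 1 from by omega]
        omega
      · rw [show d + (k+1) = d + k + 1 from by omega]
        omega
  -- ### finale
  intro μ hμ
  by_contra hc
  push_neg at hc
  have hμ0 : μ 0 ≤ i := by omega
  have h1 : monomialMem (mono3 (μ 0) (μ 1 + μ 2) 0) GK :=
    borel_2to1 hGKB (show monomialMem (mono3 (μ 0) (μ 1) (μ 2)) GK from by rwa [← eq_mono3])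
  have h2 : monomialMem (mono3 (μ 0) (μ 1 + μ 2) 0) G := hGKG h1
  have h3 := nu_le _ _ h2
  have h4 := star (μ 0) hμ0
  set e : ℕ := μ 0 + (μ 1 + μ 2) with he
  have hed : d + 1 ≤ e := by omega
  have hlow := rank_lower e (μ 0) (μ 1 + μ 2) rfl h1
  have hup := (chain (e - d)).1
  rw [show d + (e - d) = e from by omega] at hup
  omega


end
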